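/- Let n be odd and let f be drawn uniformly at random from the skew-symmetric Littlewood polynomials of length n. Then E(‖f‖₄⁴) = 2n² - 3n + 2. -/

import Mathlib

open MeasureTheory

/-- The fourth power of the `L₄` norm of `f(z) = ∑_{j<n} a_j z^j` on the unit circle. -/
noncomputable def L4pow4 (n : ℕ) (a : ℕ → ℝ) : ℝ :=
  (1 / (2 * Real.pi)) * ∫ θ in (0:ℝ)..(2 * Real.pi),
    ‖∑ j ∈ Finset.range n, (a j : ℂ) * Complex.exp ((θ : ℂ) * Complex.I) ^ j‖ ^ 4

/-- The coefficient sequence of the skew-symmetric Littlewood polynomial of odd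
length `n` determined by the free coefficients `a_0, …, a_{(n-1)/2}` (given as
Booleans encoding ±1): the remaining coefficients are determined by
`a_j = (-1)^{j+(n-1)/2} a_{n-1-j}`. -/
def skewCoef (n : ℕ) (f : Fin ((n + 1) / 2) → Bool) : ℕ → ℝ := fun j =>
  if h : j < (n + 1) / 2 then (if f ⟨j, h⟩ then 1 else -1)
  else if h2 : j < n then
    (-1 : ℝ) ^ (j + (n - 1) / 2) * (if f ⟨n - 1 - j, by omega⟩ then 1 else -1)
  else 0

namespace Stmt15Aux

open Finset Complex

/-! ### The integral computation -/

lemma cos_int (s t : ℕ) :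
    ∫ θ in (0:ℝ)..(2*Real.pi), Real.cos (((s:ℝ) - (t:ℝ)) * θ)
      = if s = t then 2*Real.pi else 0 := by
  by_cases h : s = t
  · subst h
    simp
  · rw [if_neg h]
    have hx : ((s:ℝ) - (t:ℝ)) ≠ 0 := by
      have : (s:ℝ) ≠ (t:ℝ) := by exact_mod_cast h
      exact sub_ne_zero.mpr this
    rw [intervalIntegral.integral_comp_mul_left Real.cos hx]
    rw [integral_cos]
    have h1 : ((s:ℝ) - (t:ℝ)) * (2*Real.pi) = ((2*((s:ℤ)-(t:ℤ)) : ℤ) : ℝ) * Real.pi := by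
      push_cast; ring
    have h2 : ((s:ℝ) - (t:ℝ)) * 0 = 0 := by ring
    rw [h1, h2, Real.sin_int_mul_pi, Real.sin_zero]
    simp

lemma L4pow4_eq (n : ℕ) (a : ℕ → ℝ) :
    L4pow4 n a = ∑ p ∈ range n ×ˢ range n, ∑ q ∈ range n ×ˢ range n,
      (if p.1 + p.2 = q.1 + q.2 then a p.1 * a p.2 * (a q.1 * a q.2) else 0) := by
  have hpt : ∀ θ : ℝ,
      ‖∑ j ∈ range n, (a j : ℂ) * Complex.exp ((θ:ℂ) * Complex.I) ^ j‖^4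
      = ∑ P ∈ (range n ×ˢ range n) ×ˢ (range n ×ˢ range n),
          (a P.1.1 * a P.1.2 * (a P.2.1 * a P.2.2)) *
            Real.cos ((((P.1.1 + P.1.2 : ℕ) : ℝ) - ((P.2.1 + P.2.2 : ℕ) : ℝ)) * θ) := by
    intro θ
    set e : ℂ := Complex.exp ((θ:ℂ) * Complex.I) with he
    set S : ℂ := ∑ j ∈ range n, (a j : ℂ) * e ^ j with hS
    have hsq : S ^ 2 = ∑ p ∈ range n ×ˢ range n,
        ((a p.1 * a p.2 : ℝ) : ℂ) * e ^ (p.1 + p.2) := by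
      rw [sq, hS, Finset.sum_mul_sum, Finset.sum_product]
      exact Finset.sum_congr rfl fun i _ => Finset.sum_congr rfl fun j _ => by
        push_cast; rw [pow_add]; ring
    have habs : ‖S‖ ^ 4 = (S^2 * (starRingEnd ℂ) (S^2)).re := by
      rw [Complex.mul_conj, Complex.ofReal_re, ← Complex.sq_norm, norm_pow, ← pow_mul]
    have hconj : (starRingEnd ℂ) e = Complex.exp (-(↑θ * Complex.I)) := by
      rw [he, ← Complex.exp_conj]
      congr 1
      simp
    rw [habs, hsq, map_sum, Finset.sum_mul_sum]
    conv_rhs => rw [Finset.sum_product]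
    rw [Complex.re_sum]
    refine Finset.sum_congr rfl fun p hp => ?_
    rw [Complex.re_sum]
    refine Finset.sum_congr rfl fun q hq => ?_
    have hterm : (((a p.1 * a p.2 : ℝ) : ℂ) * e ^ (p.1 + p.2)) *
        (starRingEnd ℂ) (((a q.1 * a q.2 : ℝ) : ℂ) * e ^ (q.1 + q.2))
        = ((a p.1 * a p.2 * (a q.1 * a q.2) : ℝ) : ℂ) *
            Complex.exp (↑((((p.1 + p.2 : ℕ) : ℝ) - ((q.1 + q.2 : ℕ) : ℝ)) * θ) * Complex.I) := by
      rw [map_mul, Complex.conj_ofReal, map_pow, hconj]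
      have he1 : e ^ (p.1 + p.2) = Complex.exp (((p.1 + p.2 : ℕ) : ℂ) * ((θ:ℂ) * Complex.I)) := by
        rw [Complex.exp_nat_mul]
      have he2 : Complex.exp (-(↑θ * Complex.I)) ^ (q.1 + q.2)
          = Complex.exp (((q.1 + q.2 : ℕ) : ℂ) * (-((θ:ℂ) * Complex.I))) := by
        rw [Complex.exp_nat_mul]
      rw [he1, he2]
      rw [mul_mul_mul_comm, ← Complex.exp_add]
      congr 2
      · push_cast; ring
      · push_cast; ring
    rw [hterm, Complex.re_ofReal_mul, Complex.exp_ofReal_mul_I_re]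
  unfold L4pow4
  simp only [hpt]
  rw [intervalIntegral.integral_finset_sum (fun P _ => by
    apply Continuous.intervalIntegrable
    fun_prop)]
  have hint : ∀ P : (ℕ × ℕ) × (ℕ × ℕ),
      (∫ θ in (0:ℝ)..(2*Real.pi),
        (a P.1.1 * a P.1.2 * (a P.2.1 * a P.2.2)) *
          Real.cos ((((P.1.1 + P.1.2 : ℕ) : ℝ) - ((P.2.1 + P.2.2 : ℕ) : ℝ)) * θ))
      = (a P.1.1 * a P.1.2 * (a P.2.1 * a P.2.2)) *
          (if P.1.1 + P.1.2 = P.2.1 + P.2.2 then 2*Real.pi else 0) := by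
    intro P
    rw [intervalIntegral.integral_const_mul, cos_int]
  simp only [hint]
  rw [Finset.mul_sum]
  conv_rhs => rw [← Finset.sum_product']
  refine Finset.sum_congr rfl fun P _ => ?_
  split_ifs with h
  · field_simp
  · simp

/-! ### Signs and boolean variables -/

noncomputable def eps (n j : ℕ) : ℝ :=
  if j < (n + 1) / 2 then 1 else (-1 : ℝ) ^ (j + (n - 1) / 2)

def rr (n j : ℕ) : ℕ := if j < (n + 1) / 2 then j else n - 1 - j

lemma rr_lt {n j : ℕ} (hj : j < n) : rr n j < (n + 1) / 2 := by
  unfold rr; split <;> omega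

lemma rr_eq_iff {n j k : ℕ} (hj : j < n) (hk : k < n) :
    rr n j = rr n k ↔ (j = k ∨ j + k = n - 1) := by
  unfold rr; split <;> split <;> omega

def bsign {N : ℕ} (f : Fin N → Bool) (i : Fin N) : ℝ := if f i then 1 else -1

lemma skewCoef_eq {n : ℕ} (f : Fin ((n+1)/2) → Bool) {j : ℕ} (hj : j < n) :
    skewCoef n f j = eps n j * bsign f ⟨rr n j, rr_lt hj⟩ := by
  by_cases h : j < (n+1)/2
  · have hfin : (⟨rr n j, rr_lt hj⟩ : Fin ((n+1)/2)) = ⟨j, h⟩ := by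
      simp [rr, h]
    rw [hfin]
    simp [skewCoef, h, eps, bsign]
  · have hfin : (⟨rr n j, rr_lt hj⟩ : Fin ((n+1)/2)) = ⟨n - 1 - j, by omega⟩ := by
      simp [rr, h]
    rw [hfin]
    simp [skewCoef, h, hj, eps, bsign]

lemma bsign_sq {N : ℕ} (f : Fin N → Bool) (i : Fin N) : bsign f i * bsign f i = 1 := by
  unfold bsign; split <;> norm_num

lemma bsign_update_self {N : ℕ} (f : Fin N → Bool) (i : Fin N) :
    bsign (Function.update f i (!f i)) i = - bsign f i := by
  simp only [bsign, Function.update_self]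
  cases f i <;> simp

lemma bsign_update_ne {N : ℕ} (f : Fin N → Bool) {i j : Fin N} (h : j ≠ i) :
    bsign (Function.update f i (!f i)) j = bsign f j := by
  simp [bsign, Function.update_of_ne h]

lemma sum_flip {N : ℕ} (i : Fin N) (g : (Fin N → Bool) → ℝ)
    (hg : ∀ f, g (Function.update f i (!f i)) = - g f) :
    ∑ f : Fin N → Bool, g f = 0 := by
  have hinv : Function.Involutive (fun f : Fin N → Bool => Function.update f i (!f i)) := by
    intro f; funext j
    by_cases h : j = i
    · subst h; simp
    · simp [Function.update_of_ne h]
  have h1 : ∑ f : Fin N → Bool, g (Function.update f i (!f i)) = ∑ f : Fin N → Bool, g f :=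
    Fintype.sum_bijective _ hinv.bijective _ _ (fun f => rfl)
  have h2 : ∑ f : Fin N → Bool, g (Function.update f i (!f i))
      = - ∑ f : Fin N → Bool, g f := by
    rw [← Finset.sum_neg_distrib]
    exact Finset.sum_congr rfl fun f _ => hg f
  have := h1.symm.trans h2
  linarith

lemma sum_bsign_one {N : ℕ} : ∑ _f : Fin N → Bool, (1:ℝ) = 2^N := by
  simp [Finset.card_univ]

lemma sum_bsign_pair {N : ℕ} {i j : Fin N} (h : i ≠ j) :
    ∑ f : Fin N → Bool, bsign f i * bsign f j = 0 := by
  refine sum_flip i _ (fun f => ?_)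
  rw [bsign_update_self, bsign_update_ne f (Ne.symm h)]
  ring

lemma sum_bsign_quad {N : ℕ} (w x y z : Fin N) :
    ∑ f : Fin N → Bool, bsign f w * bsign f x * bsign f y * bsign f z =
      if (w = x ∧ y = z) ∨ (w = y ∧ x = z) ∨ (w = z ∧ x = y) then (2:ℝ)^N else 0 := by
  by_cases hwx : w = x
  · subst hwx
    by_cases hyz : y = z
    · subst hyz
      rw [if_pos (Or.inl ⟨rfl, rfl⟩)]
      have key : ∀ f : Fin N → Bool, bsign f w * bsign f w * bsign f y * bsign f y = 1 := by
        intro f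
        calc bsign f w * bsign f w * bsign f y * bsign f y
            = (bsign f w * bsign f w) * (bsign f y * bsign f y) := by ring
          _ = 1 := by rw [bsign_sq, bsign_sq, one_mul]
      rw [Finset.sum_congr rfl (fun f _ => key f)]
      exact sum_bsign_one
    · rw [if_neg (by
        rintro (⟨-, h⟩ | ⟨h1, h2⟩ | ⟨h1, h2⟩)
        · exact hyz h
        · exact hyz (h1.symm.trans h2)
        · exact hyz (h2.symm.trans h1))]
      have key : ∀ f : Fin N → Bool, bsign f w * bsign f w * bsign f y * bsign f z
          = bsign f y * bsign f z := by
        intro f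
        calc bsign f w * bsign f w * bsign f y * bsign f z
            = (bsign f w * bsign f w) * (bsign f y * bsign f z) := by ring
          _ = bsign f y * bsign f z := by rw [bsign_sq, one_mul]
      rw [Finset.sum_congr rfl (fun f _ => key f)]
      exact sum_bsign_pair hyz
  · by_cases hwy : w = y
    · subst hwy
      by_cases hxz : x = z
      · subst hxz
        rw [if_pos (Or.inr (Or.inl ⟨rfl, rfl⟩))]
        have key : ∀ f : Fin N → Bool, bsign f w * bsign f x * bsign f w * bsign f x = 1 := by
          intro f
          calc bsign f w * bsign f x * bsign f w * bsign f x
              = (bsign f w * bsign f w) * (bsign f x * bsign f x) := by ring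
            _ = 1 := by rw [bsign_sq, bsign_sq, one_mul]
        rw [Finset.sum_congr rfl (fun f _ => key f)]
        exact sum_bsign_one
      · rw [if_neg (by
          rintro (⟨h1, h2⟩ | ⟨-, h⟩ | ⟨h1, h2⟩)
          · exact hxz (h1.symm.trans h2)
          · exact hxz h
          · exact hxz (h2.trans h1))]
        have key : ∀ f : Fin N → Bool, bsign f w * bsign f x * bsign f w * bsign f z
            = bsign f x * bsign f z := by
          intro f
          calc bsign f w * bsign f x * bsign f w * bsign f z
              = (bsign f w * bsign f w) * (bsign f x * bsign f z) := by ring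
            _ = bsign f x * bsign f z := by rw [bsign_sq, one_mul]
        rw [Finset.sum_congr rfl (fun f _ => key f)]
        exact sum_bsign_pair hxz
    · by_cases hwz : w = z
      · subst hwz
        by_cases hxy : x = y
        · subst hxy
          rw [if_pos (Or.inr (Or.inr ⟨rfl, rfl⟩))]
          have key : ∀ f : Fin N → Bool, bsign f w * bsign f x * bsign f x * bsign f w = 1 := by
            intro f
            calc bsign f w * bsign f x * bsign f x * bsign f w
                = (bsign f w * bsign f w) * (bsign f x * bsign f x) := by ring
              _ = 1 := by rw [bsign_sq, bsign_sq, one_mul]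
          rw [Finset.sum_congr rfl (fun f _ => key f)]
          exact sum_bsign_one
        · rw [if_neg (by
            rintro (⟨h1, h2⟩ | ⟨h1, h2⟩ | ⟨-, h⟩)
            · exact hxy ((h2.trans h1).symm)
            · exact hxy (h2.trans h1)
            · exact hxy h)]
          have key : ∀ f : Fin N → Bool, bsign f w * bsign f x * bsign f y * bsign f w
              = bsign f x * bsign f y := by
            intro f
            calc bsign f w * bsign f x * bsign f y * bsign f w
                = (bsign f w * bsign f w) * (bsign f x * bsign f y) := by ring
              _ = bsign f x * bsign f y := by rw [bsign_sq, one_mul]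
          rw [Finset.sum_congr rfl (fun f _ => key f)]
          exact sum_bsign_pair hxy
      · rw [if_neg (by
          rintro (⟨h, -⟩ | ⟨h, -⟩ | ⟨h, -⟩)
          · exact hwx h
          · exact hwy h
          · exact hwz h)]
        refine sum_flip w _ (fun f => ?_)
        rw [bsign_update_self, bsign_update_ne f (Ne.symm hwx),
          bsign_update_ne f (Ne.symm hwy), bsign_update_ne f (Ne.symm hwz)]
        ring

/-! ### Sign lemmas -/

lemma npow_neg_one_congr {a b : ℕ} (h : a % 2 = b % 2) : (-1:ℝ)^a = (-1)^b := by
  rcases Nat.even_or_odd a with ha | ha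
  · have hb : Even b := by
      rw [Nat.even_iff] at *
      omega
    rw [ha.neg_one_pow, hb.neg_one_pow]
  · have hb : Odd b := by
      rw [Nat.odd_iff] at *
      omega
    rw [ha.neg_one_pow, hb.neg_one_pow]

lemma eps_mul_self (n j : ℕ) : eps n j * eps n j = 1 := by
  unfold eps
  split
  · norm_num
  · rw [← pow_add]
    exact Even.neg_one_pow ⟨j + (n-1)/2, rfl⟩

lemma eps_antidiag {n : ℕ} (hodd : Odd n) {j : ℕ} (hj : j < n) :
    eps n j * eps n (n - 1 - j) = (-1:ℝ)^(j + (n-1)/2) := by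
  obtain ⟨m, rfl⟩ : ∃ m, n = 2*m+1 := by
    obtain ⟨m, hm⟩ := hodd; exact ⟨m, by omega⟩
  unfold eps
  by_cases h : j < (2*m+1+1)/2
  · by_cases h' : 2*m+1-1-j < (2*m+1+1)/2
    · rw [if_pos h, if_pos h', one_mul]
      have hj' : j = m := by omega
      exact (Even.neg_one_pow (⟨m, by omega⟩ : Even (j + (2*m+1-1)/2))).symm
    · rw [if_pos h, if_neg h', one_mul]
      exact npow_neg_one_congr (by omega)
  · rw [if_neg h, if_pos (by omega), mul_one]

/-! ### The expectation of one quadruple -/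

lemma sum_prod_skew {n : ℕ} (hodd : Odd n) {p1 p2 q1 q2 : ℕ}
    (h1 : p1 < n) (h2 : p2 < n) (h3 : q1 < n) (h4 : q2 < n) (hsum : p1 + p2 = q1 + q2) :
    ∑ f : Fin ((n+1)/2) → Bool,
        skewCoef n f p1 * skewCoef n f p2 * (skewCoef n f q1 * skewCoef n f q2) =
      2^((n+1)/2) * (if p1 + p2 = n - 1 then (-1:ℝ)^(p1+q1)
        else if (q1 = p1 ∧ q2 = p2) ∨ (q1 = p2 ∧ q2 = p1) then 1 else 0) := by
  have key : ∀ f, skewCoef n f p1 * skewCoef n f p2 * (skewCoef n f q1 * skewCoef n f q2)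
      = (eps n p1 * eps n p2 * (eps n q1 * eps n q2)) *
        (bsign f ⟨rr n p1, rr_lt h1⟩ * bsign f ⟨rr n p2, rr_lt h2⟩ *
         bsign f ⟨rr n q1, rr_lt h3⟩ * bsign f ⟨rr n q2, rr_lt h4⟩) := by
    intro f
    rw [skewCoef_eq f h1, skewCoef_eq f h2, skewCoef_eq f h3, skewCoef_eq f h4]
    ring
  rw [Finset.sum_congr rfl (fun f _ => key f), ← Finset.mul_sum, sum_bsign_quad]
  have hfin : ∀ {a b : ℕ} (ha : a < n) (hb : b < n),
      ((⟨rr n a, rr_lt ha⟩ : Fin ((n+1)/2)) = ⟨rr n b, rr_lt hb⟩) ↔ (a = b ∨ a + b = n - 1) := by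
    intro a b ha hb
    rw [Fin.mk.injEq, rr_eq_iff ha hb]
  by_cases hd : p1 + p2 = n - 1
  · rw [if_pos hd]
    have hM : ((⟨rr n p1, rr_lt h1⟩ : Fin ((n+1)/2)) = ⟨rr n p2, rr_lt h2⟩ ∧
        (⟨rr n q1, rr_lt h3⟩ : Fin ((n+1)/2)) = ⟨rr n q2, rr_lt h4⟩) ∨
        ((⟨rr n p1, rr_lt h1⟩ : Fin ((n+1)/2)) = ⟨rr n q1, rr_lt h3⟩ ∧
        (⟨rr n p2, rr_lt h2⟩ : Fin ((n+1)/2)) = ⟨rr n q2, rr_lt h4⟩) ∨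
        ((⟨rr n p1, rr_lt h1⟩ : Fin ((n+1)/2)) = ⟨rr n q2, rr_lt h4⟩ ∧
        (⟨rr n p2, rr_lt h2⟩ : Fin ((n+1)/2)) = ⟨rr n q1, rr_lt h3⟩) :=
      Or.inl ⟨(hfin h1 h2).mpr (Or.inr (by omega)), (hfin h3 h4).mpr (Or.inr (by omega))⟩
    rw [if_pos hM]
    have e1 : eps n p1 * eps n p2 = (-1:ℝ)^(p1 + (n-1)/2) := by
      have := eps_antidiag hodd h1
      rw [show n - 1 - p1 = p2 by omega] at this
      exact this
    have e2 : eps n q1 * eps n q2 = (-1:ℝ)^(q1 + (n-1)/2) := by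
      have := eps_antidiag hodd h3
      rw [show n - 1 - q1 = q2 by omega] at this
      exact this
    have e3 : (-1:ℝ)^(p1 + (n-1)/2) * (-1:ℝ)^(q1 + (n-1)/2) = (-1:ℝ)^(p1+q1) := by
      rw [← pow_add]
      exact npow_neg_one_congr (by omega)
    rw [e1, e2, e3, mul_comm]
  · rw [if_neg hd]
    by_cases hq : (q1 = p1 ∧ q2 = p2) ∨ (q1 = p2 ∧ q2 = p1)
    · rw [if_pos hq]
      have hM : ((⟨rr n p1, rr_lt h1⟩ : Fin ((n+1)/2)) = ⟨rr n p2, rr_lt h2⟩ ∧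
          (⟨rr n q1, rr_lt h3⟩ : Fin ((n+1)/2)) = ⟨rr n q2, rr_lt h4⟩) ∨
          ((⟨rr n p1, rr_lt h1⟩ : Fin ((n+1)/2)) = ⟨rr n q1, rr_lt h3⟩ ∧
          (⟨rr n p2, rr_lt h2⟩ : Fin ((n+1)/2)) = ⟨rr n q2, rr_lt h4⟩) ∨
          ((⟨rr n p1, rr_lt h1⟩ : Fin ((n+1)/2)) = ⟨rr n q2, rr_lt h4⟩ ∧
          (⟨rr n p2, rr_lt h2⟩ : Fin ((n+1)/2)) = ⟨rr n q1, rr_lt h3⟩) := by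
        rcases hq with ⟨e1, e2⟩ | ⟨e1, e2⟩
        · exact Or.inr (Or.inl ⟨(hfin h1 h3).mpr (Or.inl e1.symm),
            (hfin h2 h4).mpr (Or.inl e2.symm)⟩)
        · exact Or.inr (Or.inr ⟨(hfin h1 h4).mpr (Or.inl e2.symm),
            (hfin h2 h3).mpr (Or.inl e1.symm)⟩)
      rw [if_pos hM]
      have heps : eps n p1 * eps n p2 * (eps n q1 * eps n q2) = 1 := by
        have h4sq : ∀ a b : ℕ, eps n a * eps n b * (eps n a * eps n b) = 1 := by
          intro a b
          calc eps n a * eps n b * (eps n a * eps n b)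
              = (eps n a * eps n a) * (eps n b * eps n b) := by ring
            _ = 1 := by rw [eps_mul_self, eps_mul_self, one_mul]
        have h4sq' : ∀ a b : ℕ, eps n a * eps n b * (eps n b * eps n a) = 1 := by
          intro a b
          calc eps n a * eps n b * (eps n b * eps n a)
              = (eps n a * eps n a) * (eps n b * eps n b) := by ring
            _ = 1 := by rw [eps_mul_self, eps_mul_self, one_mul]
        rcases hq with ⟨e1, e2⟩ | ⟨e1, e2⟩
        · rw [e1, e2]
          exact h4sq p1 p2
        · rw [e1, e2]
          exact h4sq' p1 p2
      rw [heps, one_mul, mul_one]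
    · rw [if_neg hq]
      have hM : ¬ (((⟨rr n p1, rr_lt h1⟩ : Fin ((n+1)/2)) = ⟨rr n p2, rr_lt h2⟩ ∧
          (⟨rr n q1, rr_lt h3⟩ : Fin ((n+1)/2)) = ⟨rr n q2, rr_lt h4⟩) ∨
          ((⟨rr n p1, rr_lt h1⟩ : Fin ((n+1)/2)) = ⟨rr n q1, rr_lt h3⟩ ∧
          (⟨rr n p2, rr_lt h2⟩ : Fin ((n+1)/2)) = ⟨rr n q2, rr_lt h4⟩) ∨
          ((⟨rr n p1, rr_lt h1⟩ : Fin ((n+1)/2)) = ⟨rr n q2, rr_lt h4⟩ ∧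
          (⟨rr n p2, rr_lt h2⟩ : Fin ((n+1)/2)) = ⟨rr n q1, rr_lt h3⟩)) := by
        rintro (⟨ha, hb⟩ | ⟨ha, hb⟩ | ⟨ha, hb⟩)
        · rw [hfin h1 h2] at ha
          rw [hfin h3 h4] at hb
          exact hq (Or.inl ⟨by omega, by omega⟩)
        · rw [hfin h1 h3] at ha
          rw [hfin h2 h4] at hb
          exact hq (Or.inl ⟨by omega, by omega⟩)
        · rw [hfin h1 h4] at ha
          rw [hfin h2 h3] at hb
          exact hq (Or.inr ⟨by omega, by omega⟩)
      rw [if_neg hM, mul_zero, mul_zero]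

/-! ### The counting -/

lemma count_eval {n : ℕ} (hodd : Odd n) :
    ∑ p ∈ range n ×ˢ range n, ∑ q ∈ range n ×ˢ range n,
      (if p.1 + p.2 = q.1 + q.2 then
        (if p.1 + p.2 = n - 1 then (-1:ℝ)^(p.1+q.1)
         else if (q.1 = p.1 ∧ q.2 = p.2) ∨ (q.1 = p.2 ∧ q.2 = p.1) then 1 else 0)
       else 0)
    = 2*(n:ℝ)^2 - 3*n + 2 := by
  obtain ⟨m, hm⟩ : ∃ m, n = 2*m+1 := by
    obtain ⟨m, hm⟩ := hodd; exact ⟨m, by omega⟩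
  have hnodd : ¬ Even n := by
    rw [Nat.even_iff]
    omega
  have hgeom : ∑ j ∈ range n, (-1:ℝ)^j = 1 := by
    rw [neg_one_geom_sum, if_neg hnodd]
  -- inner q-sum evaluation
  have hinner : ∀ p1 p2 : ℕ, p1 < n → p2 < n →
      (∑ q ∈ range n ×ˢ range n,
        (if p1 + p2 = q.1 + q.2 then
          (if p1 + p2 = n - 1 then (-1:ℝ)^(p1+q.1)
           else if (q.1 = p1 ∧ q.2 = p2) ∨ (q.1 = p2 ∧ q.2 = p1) then 1 else 0)
         else 0))
      = (if p1 + p2 = n - 1 then (-1:ℝ)^p1 else if p1 = p2 then 1 else 2) := by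
    intro p1 p2 hp1 hp2
    by_cases hd : p1 + p2 = n - 1
    · rw [if_pos hd]
      have hpt : ∀ q ∈ range n ×ˢ range n,
          (if p1 + p2 = q.1 + q.2 then
            (if p1 + p2 = n - 1 then (-1:ℝ)^(p1+q.1)
             else if (q.1 = p1 ∧ q.2 = p2) ∨ (q.1 = p2 ∧ q.2 = p1) then 1 else 0)
           else 0)
          = if q.1 + q.2 = n - 1 then (-1:ℝ)^(p1+q.1) else 0 := by
        intro q _
        obtain ⟨x, y⟩ := q
        simp only [Prod.mk.injEq]
        split_ifs <;> first | rfl | (exfalso; omega) | norm_num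
      rw [Finset.sum_congr rfl hpt, Finset.sum_product]
      have hq2 : ∀ q1 ∈ range n,
          (∑ q2 ∈ range n, if q1 + q2 = n - 1 then (-1:ℝ)^(p1+q1) else 0)
          = (-1:ℝ)^(p1+q1) := by
        intro q1 hq1
        rw [Finset.mem_range] at hq1
        rw [Finset.sum_eq_single (n - 1 - q1)]
        · rw [if_pos (by omega)]
        · intro b hb hbne
          rw [Finset.mem_range] at hb
          exact if_neg (by omega)
        · intro hmem
          exact absurd (Finset.mem_range.mpr (by omega)) hmem
      rw [Finset.sum_congr rfl hq2]
      simp only [pow_add]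
      rw [← Finset.mul_sum, hgeom, mul_one]
    · rw [if_neg hd]
      by_cases hpp : p1 = p2
      · rw [if_pos hpp]
        subst hpp
        have hpt : ∀ q ∈ range n ×ˢ range n,
            (if p1 + p1 = q.1 + q.2 then
              (if p1 + p1 = n - 1 then (-1:ℝ)^(p1+q.1)
               else if (q.1 = p1 ∧ q.2 = p1) ∨ (q.1 = p1 ∧ q.2 = p1) then 1 else 0)
             else 0)
            = if q = (p1, p1) then (1:ℝ) else 0 := by
          intro q _
          obtain ⟨x, y⟩ := q
          simp only [Prod.mk.injEq]
          split_ifs <;> first | rfl | (exfalso; omega) | norm_num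
        rw [Finset.sum_congr rfl hpt, Finset.sum_ite_eq' (range n ×ˢ range n) (p1,p1)]
        rw [if_pos (Finset.mem_product.mpr ⟨Finset.mem_range.mpr hp1, Finset.mem_range.mpr hp1⟩)]
      · rw [if_neg hpp]
        have hpt : ∀ q ∈ range n ×ˢ range n,
            (if p1 + p2 = q.1 + q.2 then
              (if p1 + p2 = n - 1 then (-1:ℝ)^(p1+q.1)
               else if (q.1 = p1 ∧ q.2 = p2) ∨ (q.1 = p2 ∧ q.2 = p1) then 1 else 0)
             else 0)
            = (if q = (p1, p2) then (1:ℝ) else 0) + (if q = (p2, p1) then (1:ℝ) else 0) := by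
          intro q _
          obtain ⟨x, y⟩ := q
          simp only [Prod.mk.injEq]
          split_ifs <;> first | rfl | (exfalso; omega) | norm_num
        rw [Finset.sum_congr rfl hpt, Finset.sum_add_distrib,
          Finset.sum_ite_eq' (range n ×ˢ range n) (p1,p2),
          Finset.sum_ite_eq' (range n ×ˢ range n) (p2,p1),
          if_pos (Finset.mem_product.mpr ⟨Finset.mem_range.mpr hp1, Finset.mem_range.mpr hp2⟩),
          if_pos (Finset.mem_product.mpr ⟨Finset.mem_range.mpr hp2, Finset.mem_range.mpr hp1⟩)]
        norm_num
  have houter : ∀ p ∈ range n ×ˢ range n,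
      (∑ q ∈ range n ×ˢ range n,
        (if p.1 + p.2 = q.1 + q.2 then
          (if p.1 + p.2 = n - 1 then (-1:ℝ)^(p.1+q.1)
           else if (q.1 = p.1 ∧ q.2 = p.2) ∨ (q.1 = p.2 ∧ q.2 = p.1) then 1 else 0)
         else 0))
      = (if p.1 + p.2 = n - 1 then (-1:ℝ)^p.1 else if p.1 = p.2 then 1 else 2) := by
    intro p hp
    obtain ⟨hp1, hp2⟩ := Finset.mem_product.mp hp
    exact hinner p.1 p.2 (Finset.mem_range.mp hp1) (Finset.mem_range.mp hp2)
  rw [Finset.sum_congr rfl houter, Finset.sum_product]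
  have hsplit : ∀ p1 ∈ range n,
      (∑ p2 ∈ range n, (if p1 + p2 = n - 1 then (-1:ℝ)^p1 else if p1 = p2 then 1 else 2))
      = (-1:ℝ)^p1 + (if p1 = m then (1:ℝ) else 0) + (2*(n:ℝ) - 3) := by
    intro p1 hp1
    rw [Finset.mem_range] at hp1
    have hpt : ∀ p2 ∈ range n,
        (if p1 + p2 = n - 1 then (-1:ℝ)^p1 else if p1 = p2 then 1 else 2)
        = (if p1 + p2 = n - 1 then ((-1:ℝ)^p1 - 2 + (if p1 = p2 then 1 else 0)) else 0)
          + (if p1 = p2 then (-1:ℝ) else 0) + 2 := by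
      intro p2 _
      split_ifs <;> ring
    rw [Finset.sum_congr rfl hpt, Finset.sum_add_distrib, Finset.sum_add_distrib]
    have h1 : (∑ p2 ∈ range n,
        (if p1 + p2 = n - 1 then ((-1:ℝ)^p1 - 2 + (if p1 = p2 then 1 else 0)) else 0))
        = (-1:ℝ)^p1 - 2 + (if p1 = m then (1:ℝ) else 0) := by
      rw [Finset.sum_eq_single (n - 1 - p1)]
      · rw [if_pos (by omega)]
        congr 1
        by_cases hc : p1 = m
        · rw [if_pos (by omega), if_pos hc]
        · rw [if_neg (by omega), if_neg hc]
      · intro b hb hbne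
        rw [Finset.mem_range] at hb
        exact if_neg (by omega)
      · intro hmem
        exact absurd (Finset.mem_range.mpr (by omega)) hmem
    have h2 : (∑ p2 ∈ range n, (if p1 = p2 then (-1:ℝ) else 0)) = -1 := by
      rw [Finset.sum_ite_eq (range n) p1, if_pos (Finset.mem_range.mpr hp1)]
    have h3 : (∑ _p2 ∈ range n, (2:ℝ)) = 2*(n:ℝ) := by
      rw [Finset.sum_const, Finset.card_range, nsmul_eq_mul]
      ring
    rw [h1, h2, h3]
    ring
  rw [Finset.sum_congr rfl hsplit, Finset.sum_add_distrib, Finset.sum_add_distrib, hgeom]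
  have h4 : (∑ p1 ∈ range n, (if p1 = m then (1:ℝ) else 0)) = 1 := by
    rw [Finset.sum_ite_eq' (range n) m, if_pos (Finset.mem_range.mpr (by omega))]
  have h5 : (∑ _p1 ∈ range n, (2*(n:ℝ) - 3)) = (n:ℝ) * (2*(n:ℝ) - 3) := by
    rw [Finset.sum_const, Finset.card_range, nsmul_eq_mul]
  rw [h4, h5]
  ring

end Stmt15Aux

/-- For `f` drawn uniformly at random from the skew-symmetric Littlewood polynomials of
odd length `n`, `E(‖f‖₄⁴) = 2n² - 3n + 2`. -/
theorem stmt_15 (n : ℕ) (hodd : Odd n) :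
    (1 / 2 ^ ((n + 1) / 2) : ℝ) *
        ∑ f : Fin ((n + 1) / 2) → Bool, L4pow4 n (skewCoef n f) =
      2 * (n : ℝ) ^ 2 - 3 * n + 2 := by
  classical
  have main : (∑ f : Fin ((n + 1) / 2) → Bool, L4pow4 n (skewCoef n f))
      = 2^((n+1)/2) * (2*(n:ℝ)^2 - 3*n + 2) := by
    calc (∑ f : Fin ((n + 1) / 2) → Bool, L4pow4 n (skewCoef n f))
        = ∑ f : Fin ((n + 1) / 2) → Bool, ∑ p ∈ Finset.range n ×ˢ Finset.range n,
            ∑ q ∈ Finset.range n ×ˢ Finset.range n,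
            (if p.1 + p.2 = q.1 + q.2 then
              skewCoef n f p.1 * skewCoef n f p.2 * (skewCoef n f q.1 * skewCoef n f q.2)
             else 0) :=
          Finset.sum_congr rfl fun f _ => Stmt15Aux.L4pow4_eq n (skewCoef n f)
      _ = ∑ p ∈ Finset.range n ×ˢ Finset.range n, ∑ q ∈ Finset.range n ×ˢ Finset.range n,
            ∑ f : Fin ((n + 1) / 2) → Bool,
            (if p.1 + p.2 = q.1 + q.2 then
              skewCoef n f p.1 * skewCoef n f p.2 * (skewCoef n f q.1 * skewCoef n f q.2)
             else 0) := by
          rw [Finset.sum_comm]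
          exact Finset.sum_congr rfl fun p _ => Finset.sum_comm
      _ = ∑ p ∈ Finset.range n ×ˢ Finset.range n, ∑ q ∈ Finset.range n ×ˢ Finset.range n,
            2^((n+1)/2) *
            (if p.1 + p.2 = q.1 + q.2 then
              (if p.1 + p.2 = n - 1 then (-1:ℝ)^(p.1+q.1)
               else if (q.1 = p.1 ∧ q.2 = p.2) ∨ (q.1 = p.2 ∧ q.2 = p.1) then 1 else 0)
             else 0) := by
          refine Finset.sum_congr rfl fun p hp => Finset.sum_congr rfl fun q hq => ?_
          obtain ⟨hp1, hp2⟩ := Finset.mem_product.mp hp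
          obtain ⟨hq1, hq2⟩ := Finset.mem_product.mp hq
          by_cases hc : p.1 + p.2 = q.1 + q.2
          · simp only [if_pos hc]
            exact Stmt15Aux.sum_prod_skew hodd (Finset.mem_range.mp hp1)
              (Finset.mem_range.mp hp2) (Finset.mem_range.mp hq1)
              (Finset.mem_range.mp hq2) hc
          · simp only [if_neg hc, Finset.sum_const_zero, mul_zero]
      _ = 2^((n+1)/2) * (2*(n:ℝ)^2 - 3*n + 2) := by
          simp only [← Finset.mul_sum]
          rw [Stmt15Aux.count_eval hodd]
  rw [main, ← mul_assoc, one_div_mul_cancel (by positivity), one_mul]
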